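/- Let (ε_n)_{n≥1} be a sequence of positive reals with ε_n → 0. Then there exists a monotone non-increasing slowly varying function h : ℕ → (0,∞) with h_n → 0 and ε_n ≤ h_n for all n, where slowly varying means h_{2n}/h_n → 1 as n → ∞. -/

import Mathlib

open Filter

/-- The step sequence: `s k = 1 / ((log₂ k + 1) * 2 ^ log₂ k)`. -/
noncomputable def sSeq (k : ℕ) : ℝ := ((Nat.log 2 k + 1 : ℝ) * 2 ^ Nat.log 2 k)⁻¹

lemma sSeq_pos (k : ℕ) : 0 < sSeq k := by
  apply inv_pos.2
  positivity

lemma sSeq_antitone : Antitone sSeq := by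
  intro a b hab
  apply inv_anti₀
  · positivity
  · have h := Nat.log_mono_right (b := 2) hab
    apply mul_le_mul
    · exact_mod_cast Nat.succ_le_succ h
    · exact_mod_cast Nat.pow_le_pow_right (by norm_num) h
    · positivity
    · positivity

lemma sSeq_eq_on_block {r k : ℕ} (h1 : 2 ^ r ≤ k) (h2 : k < 2 ^ (r + 1)) :
    sSeq k = ((r + 1 : ℝ) * 2 ^ r)⁻¹ := by
  rw [sSeq, Nat.log_eq_of_pow_le_of_lt_pow h1 h2]

/-- Partial sums of `sSeq` up to `2 ^ (R+1)` dominate the harmonic sum. -/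
lemma sum_sSeq_pow (R : ℕ) :
    ∑ k ∈ Finset.range (R + 1), (1 : ℝ) / (k + 1) ≤
      ∑ k ∈ Finset.range (2 ^ (R + 1)), sSeq k := by
  induction R with
  | zero =>
    norm_num [Finset.sum_range_succ, sSeq, Nat.log_zero_right, Nat.log_one_right]
  | succ R ih =>
    have hsub : (2:ℕ) ^ (R + 1) ≤ 2 ^ (R + 2) := Nat.pow_le_pow_right (by norm_num) (by omega)
    have hsplit : ∑ k ∈ Finset.range (2 ^ (R + 2)), sSeq k
        = (∑ k ∈ Finset.range (2 ^ (R + 1)), sSeq k)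
          + ∑ k ∈ Finset.Ico (2 ^ (R + 1)) (2 ^ (R + 2)), sSeq k := by
      rw [Finset.range_eq_Ico, Finset.range_eq_Ico]
      exact (Finset.sum_Ico_consecutive sSeq (Nat.zero_le _) hsub).symm
    have hblock : ∑ k ∈ Finset.Ico (2 ^ (R + 1)) (2 ^ (R + 2)), sSeq k
        = (1 : ℝ) / (R + 1 + 1) := by
      have heq : ∀ k ∈ Finset.Ico (2 ^ (R + 1)) (2 ^ (R + 2)), sSeq k
          = ((R + 1 + 1 : ℝ) * 2 ^ (R + 1))⁻¹ := by
        intro k hk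
        rw [Finset.mem_Ico] at hk
        rw [sSeq_eq_on_block hk.1 hk.2]
        push_cast; ring_nf
      rw [Finset.sum_congr rfl heq, Finset.sum_const, Nat.card_Ico]
      have h2 : 2 ^ (R + 2) - 2 ^ (R + 1) = 2 ^ (R + 1) := by
        rw [pow_succ]; omega
      rw [h2, nsmul_eq_mul]
      push_cast
      field_simp
    rw [hsplit, hblock, Finset.sum_range_succ]
    push_cast
    linarith

lemma not_summable_sSeq : ¬ Summable sSeq := by
  rw [not_summable_iff_tendsto_nat_atTop_of_nonneg (fun k => (sSeq_pos k).le)]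
  have hmono : Monotone (fun n => ∑ k ∈ Finset.range n, sSeq k) := by
    intro a b hab
    exact Finset.sum_le_sum_of_subset_of_nonneg (Finset.range_subset_range.2 hab)
      (fun k _ _ => (sSeq_pos k).le)
  exact tendsto_atTop_of_monotone_of_subseq hmono (φ := fun R : ℕ => 2 ^ (R + 1))
    (l := atTop)
    (tendsto_atTop_mono sum_sSeq_pow
      (Real.tendsto_sum_range_one_div_nat_succ_atTop.comp (tendsto_add_atTop_nat 1)))

/-- The capped running sum. -/
noncomputable def Saux (L : ℕ → ℝ) : ℕ → ℝ
  | 0 => 0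
  | n + 1 => min (Saux L n + sSeq (n + 1)) (L (n + 1))

theorem stmt_8 (ε : ℕ → ℝ) (hpos : ∀ n, 0 < ε n) (hlim : Tendsto ε atTop (nhds 0)) :
    ∃ h : ℕ → ℝ, (∀ n, 0 < h n) ∧ Antitone h ∧ Tendsto h atTop (nhds 0)
      ∧ (∀ n, ε n ≤ h n)
      ∧ Tendsto (fun n => h (2 * n) / h n) atTop (nhds 1) := by
  -- the tail sup δ
  have hbdd : BddAbove (Set.range ε) := hlim.bddAbove_range
  set δ : ℕ → ℝ := fun n => sSup (ε '' Set.Ici n) with hδ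
  have hbddn : ∀ n, BddAbove (ε '' Set.Ici n) :=
    fun n => hbdd.mono (Set.image_subset_range _ _)
  have hδge : ∀ n, ε n ≤ δ n := fun n =>
    le_csSup (hbddn n) ⟨n, Set.self_mem_Ici, rfl⟩
  have hδpos : ∀ n, 0 < δ n := fun n => lt_of_lt_of_le (hpos n) (hδge n)
  have hδanti : Antitone δ := by
    intro a b hab
    exact csSup_le_csSup (hbddn a) ⟨ε b, b, Set.self_mem_Ici, rfl⟩
      (Set.image_mono (Set.Ici_subset_Ici.2 hab))
  have hδlim : Tendsto δ atTop (nhds 0) := by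
    rw [tendsto_order]
    refine ⟨fun a ha => Eventually.of_forall fun n => lt_of_lt_of_le ha (hδpos n).le,
      fun a ha => ?_⟩
    have hev : ∀ᶠ n in atTop, ε n < a / 2 := hlim.eventually (gt_mem_nhds (by linarith))
    rw [eventually_atTop] at hev ⊢
    obtain ⟨N, hN⟩ := hev
    refine ⟨N, fun n hn => lt_of_le_of_lt (csSup_le ⟨ε n, n, Set.self_mem_Ici, rfl⟩ ?_)
      (by linarith : a / 2 < a)⟩
    rintro x ⟨j, hj, rfl⟩
    exact (hN j (le_trans hn hj)).le
  -- the cap L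
  set M : ℝ := max 1 (δ 0) with hM
  have hM1 : (1:ℝ) ≤ M := le_max_left _ _
  have hMpos : (0:ℝ) < M := lt_of_lt_of_le one_pos hM1
  have hδleM : ∀ n, δ n ≤ M := fun n => le_trans (hδanti (Nat.zero_le n)) (le_max_right _ _)
  set L : ℕ → ℝ := fun n => Real.log (M / δ n) with hL
  have hLnonneg : ∀ n, 0 ≤ L n := fun n =>
    Real.log_nonneg ((one_le_div (hδpos n)).2 (hδleM n))
  have hLmono : Monotone L := by
    intro a b hab
    exact Real.log_le_log (div_pos hMpos (hδpos a))
      (div_le_div_of_nonneg_left hMpos.le (hδpos b) (hδanti hab))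
  have hLtop : Tendsto L atTop atTop := by
    apply Real.tendsto_log_atTop.comp
    have h1 : Tendsto δ atTop (nhdsWithin 0 (Set.Ioi 0)) :=
      tendsto_nhdsWithin_of_tendsto_nhds_of_eventually_within _ hδlim
        (Eventually.of_forall fun n => hδpos n)
    simpa [div_eq_mul_inv] using h1.inv_tendsto_nhdsGT_zero.const_mul_atTop hMpos
  -- the capped sum S
  set S : ℕ → ℝ := Saux L with hS
  have hScap : ∀ n, S n ≤ L n := by
    intro n
    cases n with
    | zero => exact hLnonneg 0
    | succ n => exact min_le_right _ _
  have hSmono : Monotone S := by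
    apply monotone_nat_of_le_succ
    intro n
    exact le_min (le_add_of_nonneg_right (sSeq_pos (n+1)).le)
      (le_trans (hScap n) (hLmono (Nat.le_succ n)))
  have hSstep : ∀ n, S (n + 1) - S n ≤ sSeq (n + 1) := by
    intro n
    have : S (n + 1) ≤ S n + sSeq (n + 1) := min_le_left _ _
    linarith
  -- S → ∞
  have hStop : Tendsto S atTop atTop := by
    rw [tendsto_atTop]
    intro B
    by_contra hcon
    push_neg at hcon
    have hcon : ∃ᶠ x in atTop, ¬ B ≤ S x := hcon.mono fun x hx => not_le.2 hx
    have hSltB : ∀ n, S n < B := by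
      intro n
      by_contra hge
      push_neg at hge
      have : ∀ᶠ m in atTop, B ≤ S m :=
        eventually_atTop.2 ⟨n, fun m hm => le_trans hge (hSmono hm)⟩
      exact (hcon.and_eventually this).exists.elim (fun m hm => absurd hm.2 (not_le.2 (lt_of_not_ge hm.1)))
    obtain ⟨N, hNL⟩ := eventually_atTop.1 (hLtop.eventually (eventually_ge_atTop B))
    have hfree : ∀ m, S (N + m) = S N + ∑ i ∈ Finset.range m, sSeq (N + i + 1) := by
      intro m
      induction m with
      | zero => simp
      | succ m ih =>
        have hkey : S (N + m) + sSeq (N + m + 1) < L (N + m + 1) := by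
          by_contra hge
          push_neg at hge
          have : S (N + m + 1) = L (N + m + 1) := by
            show min _ _ = _
            rw [min_eq_right hge]
          have hB := hNL (N + m + 1) (by omega)
          exact absurd (hSltB (N + m + 1)) (not_lt.2 (this ▸ hB))
        have : S (N + m + 1) = S (N + m) + sSeq (N + m + 1) := by
          show min _ _ = _
          rw [min_eq_left hkey.le]
        rw [show N + (m + 1) = N + m + 1 from rfl, this, ih, Finset.sum_range_succ]
        ring
    have hsum : Tendsto (fun m => ∑ i ∈ Finset.range m, sSeq (N + i + 1)) atTop atTop := by
      rw [← not_summable_iff_tendsto_nat_atTop_of_nonneg (fun i => (sSeq_pos _).le)]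
      intro hs
      apply not_summable_sSeq
      have : Summable (fun i => sSeq (i + (N + 1))) := by
        apply hs.congr
        intro i
        congr 1
        omega
      exact (summable_nat_add_iff (N + 1)).1 this
    have : Tendsto (fun m => S (N + m)) atTop atTop := by
      simp_rw [hfree]
      exact tendsto_atTop_add_const_left _ _ hsum
    obtain ⟨m, hm⟩ := (this.eventually (eventually_ge_atTop B)).exists
    exact absurd (hSltB (N + m)) (not_lt.2 hm)
  -- the tail sums of sSeq over [n, 2n) tend to 0
  have hSdiff : ∀ n, 1 ≤ n → S (2 * n) - S n ≤ 2 / (Nat.log 2 (n + 1) + 1 : ℝ) := by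
    intro n hn
    have htel : S (2 * n) - S n ≤ ∑ m ∈ Finset.Ico n (2 * n), sSeq (m + 1) := by
      have : ∀ k, S (n + k) - S n ≤ ∑ m ∈ Finset.Ico n (n + k), sSeq (m + 1) := by
        intro k
        induction k with
        | zero => simp
        | succ k ih =>
          rw [show n + (k+1) = (n + k) + 1 from rfl,
            Finset.sum_Ico_succ_top (by omega)]
          have := hSstep (n + k)
          linarith
      have h2 := this n
      rw [show n + n = 2 * n by ring] at h2
      exact h2
    have hbound : ∑ m ∈ Finset.Ico n (2 * n), sSeq (m + 1)
        ≤ n * sSeq (n + 1) := by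
      calc ∑ m ∈ Finset.Ico n (2 * n), sSeq (m + 1)
          ≤ ∑ _m ∈ Finset.Ico n (2 * n), sSeq (n + 1) :=
            Finset.sum_le_sum (fun m hm => sSeq_antitone
              (by have := (Finset.mem_Ico.1 hm).1; omega))
        _ = n * sSeq (n + 1) := by
            rw [Finset.sum_const, Nat.card_Ico, nsmul_eq_mul]
            have hcard : 2 * n - n = n := by omega
            rw [hcard]
    have hs : (n : ℝ) * sSeq (n + 1) ≤ 2 / (Nat.log 2 (n + 1) + 1 : ℝ) := by
      set r := Nat.log 2 (n + 1) with hr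
      have h2r : (n + 1 : ℕ) < 2 ^ (r + 1) := Nat.lt_pow_succ_log_self (by norm_num) _
      have hps : ((n:ℝ) + 1) < 2 * 2 ^ r := by
        have : ((n + 1 : ℕ) : ℝ) < ((2 ^ (r+1) : ℕ) : ℝ) := by exact_mod_cast h2r
        push_cast [pow_succ] at this
        linarith
      rw [sSeq, show Nat.log 2 (n + 1) = r from rfl]
      have h1 : (n:ℝ) * (((r:ℝ) + 1) * 2 ^ r)⁻¹ ≤ (2 * 2 ^ r) * (((r:ℝ) + 1) * 2 ^ r)⁻¹ :=
        mul_le_mul_of_nonneg_right (by linarith) (by positivity)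
      have h2 : ((2:ℝ) * 2 ^ r) * (((r:ℝ) + 1) * 2 ^ r)⁻¹ = 2 / ((r:ℝ) + 1) := by
        rw [mul_inv]
        field_simp
      calc (n:ℝ) * (((r:ℝ) + 1) * 2 ^ r)⁻¹
          ≤ (2 * 2 ^ r) * (((r:ℝ) + 1) * 2 ^ r)⁻¹ := h1
        _ = 2 / ((r:ℝ) + 1) := h2
    calc S (2 * n) - S n ≤ ∑ m ∈ Finset.Ico n (2 * n), sSeq (m + 1) := htel
      _ ≤ n * sSeq (n + 1) := hbound
      _ ≤ 2 / (Nat.log 2 (n + 1) + 1 : ℝ) := hs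
  -- assemble
  set h : ℕ → ℝ := fun n => M * Real.exp (-(S n)) with hh
  have hhpos : ∀ n, 0 < h n := fun n => mul_pos hMpos (Real.exp_pos _)
  have hhanti : Antitone h := fun a b hab =>
    mul_le_mul_of_nonneg_left (Real.exp_le_exp.2 (neg_le_neg (hSmono hab))) hMpos.le
  have hh0 : Tendsto h atTop (nhds 0) := by
    have : Tendsto (fun n => Real.exp (-(S n))) atTop (nhds 0) :=
      Real.tendsto_exp_atBot.comp (tendsto_neg_atTop_atBot.comp hStop)
    simpa using this.const_mul M
  have hhge : ∀ n, ε n ≤ h n := by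
    intro n
    have hexp : Real.exp (L n) = M / δ n := Real.exp_log (div_pos hMpos (hδpos n))
    have hδeq : M * Real.exp (-(L n)) = δ n := by
      rw [Real.exp_neg, hexp]
      field_simp
    have hle : M * Real.exp (-(L n)) ≤ M * Real.exp (-(S n)) :=
      mul_le_mul_of_nonneg_left (Real.exp_le_exp.2 (neg_le_neg (hScap n))) hMpos.le
    calc ε n ≤ δ n := hδge n
      _ = M * Real.exp (-(L n)) := hδeq.symm
      _ ≤ h n := hle
  refine ⟨h, hhpos, hhanti, hh0, hhge, ?_⟩
  -- the ratio
  have hratio : ∀ n, h (2 * n) / h n = Real.exp (-(S (2 * n) - S n)) := by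
    intro n
    show M * Real.exp (-(S (2 * n))) / (M * Real.exp (-(S n))) = _
    rw [mul_div_mul_left _ _ hMpos.ne', ← Real.exp_sub]
    ring_nf
  have hdiff0 : Tendsto (fun n => S (2 * n) - S n) atTop (nhds 0) := by
    have hub : Tendsto (fun n => 2 / ((Nat.log 2 (n + 1) : ℝ) + 1)) atTop (nhds 0) := by
      have hlogN : Tendsto (fun n => Nat.log 2 (n + 1)) atTop atTop := by
        apply tendsto_atTop_atTop.2
        intro b
        refine ⟨2 ^ b, fun n hn => ?_⟩
        exact Nat.le_log_of_pow_le (by norm_num) (by omega)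
      have hlogR : Tendsto (fun n => ((Nat.log 2 (n + 1) : ℝ) + 1)) atTop atTop :=
        tendsto_atTop_add_const_right _ 1 (tendsto_natCast_atTop_atTop.comp hlogN)
      have := hlogR.inv_tendsto_atTop
      have h2 := this.const_mul (2:ℝ)
      simpa [div_eq_mul_inv] using h2
    apply tendsto_of_tendsto_of_tendsto_of_le_of_le' tendsto_const_nhds hub
    · exact Eventually.of_forall fun n => by
        have : S n ≤ S (2 * n) := hSmono (by omega)
        linarith
    · filter_upwards [eventually_ge_atTop 1] with n hn
      exact hSdiff n hn
  have hneg : Tendsto (fun n => -(S (2 * n) - S n)) atTop (nhds 0) := by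
    simpa using hdiff0.neg
  have := (Real.continuous_exp.tendsto 0).comp hneg
  simp only [Function.comp_def, Real.exp_zero] at this
  exact Tendsto.congr (fun n => (hratio n).symm) this
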